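/- arXiv:2309.07843 — 10 statements merged into one kernel-verified Lean document; each statement's English description precedes it below -/
import Mathlib

section
/- Fix u ∈ ℂ and reals σ ≠ 0, ρ, and κ₀ ∈ ℝ. Set α̂ = -(1/2)·u·(u + i), γ = σ²/2, and β(κ) = κ - i·u·σ·ρ for κ ∈ ℝ. Let d : ℝ → ℂ satisfy HasDerivAt d (β(κ₀)/d(κ₀)) κ₀ with d(κ₀) ≠ 0 and β(κ₀) + d(κ₀) ≠ 0, and define g(κ) = (β(κ) - d(κ))/(β(κ) + d(κ)). Then HasDerivAt g (-2·g(κ₀)/d(κ₀)) κ₀. -/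
/-- Derivative of `g = (β - d)/(β + d)` with respect to the mean-reversion
speed `κ`: `∂g/∂κ = -2 g / d`. -/
theorem heston_g_deriv_kappa (u : ℂ) (σ ρ κ₀ : ℝ) (hσ : σ ≠ 0)
    (β : ℝ → ℂ) (hβ : ∀ κ : ℝ, β κ = (κ : ℂ) - Complex.I * u * σ * ρ)
    (d : ℝ → ℂ) (hd : HasDerivAt d (β κ₀ / d κ₀) κ₀)
    (hd0 : d κ₀ ≠ 0) (hβd : β κ₀ + d κ₀ ≠ 0)
    (g : ℝ → ℂ) (hg : ∀ κ : ℝ, g κ = (β κ - d κ) / (β κ + d κ)) :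
    HasDerivAt g (-2 * g κ₀ / d κ₀) κ₀ := by
  have hβ' : HasDerivAt β 1 κ₀ := by
    have h1 : HasDerivAt (fun κ : ℝ => (κ : ℂ)) 1 κ₀ := by
      simpa using (hasDerivAt_id κ₀).ofReal_comp
    have := h1.sub_const (Complex.I * u * σ * ρ)
    exact this.congr_of_eventuallyEq (by filter_upwards with κ; rw [hβ κ])
  have hnum : HasDerivAt (fun κ => β κ - d κ) (1 - β κ₀ / d κ₀) κ₀ := hβ'.sub hd
  have hden : HasDerivAt (fun κ => β κ + d κ) (1 + β κ₀ / d κ₀) κ₀ := hβ'.add hd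
  have hdiv := hnum.div hden hβd
  have heq : ((1 - β κ₀ / d κ₀) * (β κ₀ + d κ₀) - (β κ₀ - d κ₀) * (1 + β κ₀ / d κ₀)) /
      (β κ₀ + d κ₀) ^ 2 = -2 * g κ₀ / d κ₀ := by
    rw [hg κ₀]
    field_simp
    ring
  rw [heq] at hdiv
  exact hdiv.congr_of_eventuallyEq (by filter_upwards with κ; rw [hg κ]; rfl)
end

section
/- Fix u ∈ ℂ and reals σ ≠ 0, ρ, τ > 0 and κ₀ ∈ ℝ. Set α̂ = -(1/2)·u·(u + i), γ = σ²/2, and β(κ) = κ - i·u·σ·ρ for κ ∈ ℝ. Let d : ℝ → ℂ satisfy HasDerivAt d (β(κ₀)/d(κ₀)) κ₀ with d(κ₀) ≠ 0 and β(κ₀) + d(κ₀) ≠ 0, and define g(κ) = (β(κ) - d(κ))/(β(κ) + d(κ)). Write β, d, g for the values at κ₀, and assume g ≠ 1, g·exp(-d·τ) - 1 ≠ 0, and that (g·exp(-d·τ) - 1)/(g - 1) lies in the slit plane. Then the function κ ↦ Log((g(κ)·exp(-d(κ)·τ) - 1)/(g(κ) - 1)) has derivative at κ₀ equal to (2·g·(g·exp(-d·τ)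 - 1) - g·(g - 1)·exp(-d·τ)·(2 + τ·β)) / (d·(g - 1)·(g·exp(-d·τ) - 1)). -/
/-- Derivative with respect to `κ` of `Log((g e^{-dτ} - 1)/(g - 1))`
(Appendix B.6 of the paper). -/
theorem heston_log_deriv_kappa (u : ℂ) (σ ρ τ κ₀ : ℝ) (hσ : σ ≠ 0) (hτ : 0 < τ)
    (β : ℝ → ℂ) (hβ : ∀ κ : ℝ, β κ = (κ : ℂ) - Complex.I * u * σ * ρ)
    (d : ℝ → ℂ) (hd : HasDerivAt d (β κ₀ / d κ₀) κ₀)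
    (hd0 : d κ₀ ≠ 0) (hβd : β κ₀ + d κ₀ ≠ 0)
    (g : ℝ → ℂ) (hg : ∀ κ : ℝ, g κ = (β κ - d κ) / (β κ + d κ))
    (hg1 : g κ₀ ≠ 1)
    (hden : g κ₀ * Complex.exp (-(d κ₀) * τ) - 1 ≠ 0)
    (hslit : (g κ₀ * Complex.exp (-(d κ₀) * τ) - 1) / (g κ₀ - 1) ∈ Complex.slitPlane) :
    HasDerivAt (fun κ : ℝ =>
        Complex.log ((g κ * Complex.exp (-(d κ) * τ) - 1) / (g κ - 1)))
      ((2 * g κ₀ * (g κ₀ * Complex.exp (-(d κ₀) * τ) - 1)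
          - g κ₀ * (g κ₀ - 1) * Complex.exp (-(d κ₀) * τ) * (2 + (τ : ℂ) * β κ₀))
        / (d κ₀ * (g κ₀ - 1) * (g κ₀ * Complex.exp (-(d κ₀) * τ) - 1))) κ₀ := by
  have hβfun : β = fun κ : ℝ => (κ : ℂ) - Complex.I * u * σ * ρ := funext hβ
  have hβ' : HasDerivAt β 1 κ₀ := by
    rw [hβfun]
    simpa using ((hasDerivAt_id κ₀).ofReal_comp).sub_const (Complex.I * u * σ * ρ)
  have hg1' : g κ₀ - 1 ≠ 0 := sub_ne_zero.mpr hg1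
  -- derivative of g
  have hg' : HasDerivAt g (-2 * g κ₀ / d κ₀) κ₀ := by
    have h := ((hβ'.sub hd).div (hβ'.add hd) hβd)
    have hgfun : g = fun κ => (β κ - d κ) / (β κ + d κ) := funext hg
    rw [hgfun]
    convert h using 1
    · rfl
    · rfl
    simp only [Pi.add_apply, Pi.sub_apply]
    field_simp
    ring
  -- derivative of numerator g e^{-dτ} - 1
  have hexp : HasDerivAt (fun κ : ℝ => Complex.exp (-(d κ) * τ))
      (Complex.exp (-(d κ₀) * τ) * (-(β κ₀ / d κ₀) * τ)) κ₀ :=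
    (hd.neg.mul_const (τ : ℂ)).cexp
  have hN : HasDerivAt (fun κ : ℝ => g κ * Complex.exp (-(d κ) * τ) - 1)
      (-2 * g κ₀ / d κ₀ * Complex.exp (-(d κ₀) * τ)
        + g κ₀ * (Complex.exp (-(d κ₀) * τ) * (-(β κ₀ / d κ₀) * τ))) κ₀ :=
    (hg'.mul hexp).sub_const 1
  have hD : HasDerivAt (fun κ : ℝ => g κ - 1) (-2 * g κ₀ / d κ₀) κ₀ :=
    hg'.sub_const 1
  have hF := hN.div hD hg1'
  have hL := hF.clog_real hslit
  have hE := Complex.exp_ne_zero (-(d κ₀) * τ)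
  convert hL using 1
  · rfl
  simp only [Pi.div_apply]
  rw [div_div, div_eq_div_iff
    (mul_ne_zero (mul_ne_zero hd0 hg1') hden)
    (mul_ne_zero (pow_ne_zero 2 hg1') (div_ne_zero hden hg1'))]
  field_simp
  ring
end

section
/- Fix u ∈ ℂ and reals σ ≠ 0, ρ, θ, τ > 0 and κ₀ ∈ ℝ with κ₀ ≠ 0. Set α̂ = -(1/2)·u·(u + i), γ = σ²/2, and β(κ) = κ - i·u·σ·ρ for κ ∈ ℝ. Let d : ℝ → ℂ satisfy HasDerivAt d (β(κ₀)/d(κ₀)) κ₀ with d(κ₀) ≠ 0 and β(κ₀) + d(κ₀) ≠ 0, define g(κ) = (β(κ) - d(κ))/(β(κ) + d(κ)), and define A(κ) = (κ·θ/σ²)·( τ·(β(κ) - d(κ)) - 2·Log((g(κ)·exp(-d(κ)·τ) - 1)/(g(κ) - 1)) ). Write β, d, g for the values at κ₀, assume g ≠ 1, g·exp(-d·τ) - 1 ≠ 0, and that (g·exp(-d·τ) - 1)/(g - 1) lies in the slit plane. Then HasDerivAt A ( A(κ₀)/κ₀ - (κ₀·θ/(d·σ²))·( -d·τ + τ·β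 + 4·g/(g - 1) + 2·g·exp(-d·τ)·(2 + τ·β)/(1 - g·exp(-d·τ)) ) ) κ₀. -/
private lemma heston_aux (G E0 D0 B t K T S2 : ℂ) (hD : D0 ≠ 0) :
    K * T / S2 * (t * (1 - B / D0)
        - 2 * ((2 * G / (G - 1) + G * E0 * (2 + t * B) / (1 - G * E0)) / D0))
      = -(K * T / (D0 * S2) * (-D0 * t + t * B + 4 * G / (G - 1)
          + 2 * G * E0 * (2 + t * B) / (1 - G * E0))) := by
  have hV : (2 * G / (G - 1) + G * E0 * (2 + t * B) / (1 - G * E0)) / D0 * D0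
      = 2 * G / (G - 1) + G * E0 * (2 + t * B) / (1 - G * E0) := div_mul_cancel₀ _ hD
  have key2' : -D0 * t + t * B + 4 * G / (G - 1) + 2 * G * E0 * (2 + t * B) / (1 - G * E0)
      = -D0 * t + t * B
        + 2 * (((2 * G / (G - 1) + G * E0 * (2 + t * B) / (1 - G * E0)) / D0) * D0) := by
    rw [hV]; ring
  rw [key2']
  generalize (2 * G / (G - 1) + G * E0 * (2 + t * B) / (1 - G * E0)) / D0 = V
  by_cases hS : S2 = 0
  · simp [hS]
  · field_simp
    ring

/-- Derivative of the component `A` of the Heston characteristic function with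
respect to the mean-reversion speed `κ` (Equation (35) of the paper). -/
theorem heston_A_deriv_kappa (u : ℂ) (σ ρ θ τ κ₀ : ℝ) (hσ : σ ≠ 0) (hτ : 0 < τ)
    (hκ₀ : κ₀ ≠ 0)
    (β : ℝ → ℂ) (hβ : ∀ κ : ℝ, β κ = (κ : ℂ) - Complex.I * u * σ * ρ)
    (d : ℝ → ℂ) (hd : HasDerivAt d (β κ₀ / d κ₀) κ₀)
    (hd0 : d κ₀ ≠ 0) (hβd : β κ₀ + d κ₀ ≠ 0)
    (g : ℝ → ℂ) (hg : ∀ κ : ℝ, g κ = (β κ - d κ) / (β κ + d κ))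
    (A : ℝ → ℂ)
    (hA : ∀ κ : ℝ, A κ = ((κ : ℂ) * θ / σ ^ 2) *
        ((τ : ℂ) * (β κ - d κ)
          - 2 * Complex.log ((g κ * Complex.exp (-(d κ) * τ) - 1) / (g κ - 1))))
    (hg1 : g κ₀ ≠ 1)
    (hden : g κ₀ * Complex.exp (-(d κ₀) * τ) - 1 ≠ 0)
    (hslit : (g κ₀ * Complex.exp (-(d κ₀) * τ) - 1) / (g κ₀ - 1) ∈ Complex.slitPlane) :
    HasDerivAt A
      (A κ₀ / (κ₀ : ℂ)
        - ((κ₀ : ℂ) * θ / (d κ₀ * σ ^ 2)) *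
          (-(d κ₀) * τ + (τ : ℂ) * β κ₀ + 4 * g κ₀ / (g κ₀ - 1)
            + 2 * g κ₀ * Complex.exp (-(d κ₀) * τ) * (2 + (τ : ℂ) * β κ₀)
              / (1 - g κ₀ * Complex.exp (-(d κ₀) * τ)))) κ₀ := by
  have hκ₀' : (κ₀ : ℂ) ≠ 0 := Complex.ofReal_ne_zero.mpr hκ₀
  have hσ' : (σ : ℂ) ≠ 0 := Complex.ofReal_ne_zero.mpr hσ
  have hg1' : g κ₀ - 1 ≠ 0 := sub_ne_zero.mpr hg1
  have hgE1 : 1 - g κ₀ * Complex.exp (-(d κ₀) * τ) ≠ 0 := by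
    intro h; apply hden; linear_combination -h
  have hden2 : g κ₀ * Complex.exp (-(d κ₀ * (τ : ℂ))) - 1 ≠ 0 := by rwa [← neg_mul]
  have hgE2 : (1 : ℂ) - g κ₀ * Complex.exp (-(d κ₀ * (τ : ℂ))) ≠ 0 := by rwa [← neg_mul]
  -- derivative of β
  have hβfun : β = fun κ : ℝ => (κ : ℂ) - Complex.I * u * σ * ρ := funext hβ
  have hβ' : HasDerivAt β 1 κ₀ := by
    rw [hβfun]
    have : HasDerivAt (fun κ : ℝ => (κ : ℂ)) 1 κ₀ := by
      simpa using (hasDerivAt_id κ₀).ofReal_comp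
    simpa using this.sub_const (Complex.I * u * σ * ρ)
  -- derivative of g
  have hgder : HasDerivAt g (-2 * g κ₀ / d κ₀) κ₀ := by
    have h1 : HasDerivAt (fun κ => β κ - d κ) (1 - β κ₀ / d κ₀) κ₀ := hβ'.sub hd
    have h2 : HasDerivAt (fun κ => β κ + d κ) (1 + β κ₀ / d κ₀) κ₀ := hβ'.add hd
    have h3 := h1.div h2 hβd
    rw [funext hg]
    refine h3.congr_deriv ?_
    symm
    show -2 * ((β κ₀ - d κ₀) / (β κ₀ + d κ₀)) / d κ₀ = _
    field_simp
    ring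
  -- derivative of the exponential
  have hEder : HasDerivAt (fun κ => Complex.exp (-(d κ) * τ))
      (-(β κ₀ / d κ₀) * τ * Complex.exp (-(d κ₀) * τ)) κ₀ := by
    have h1 : HasDerivAt (fun κ => -(d κ) * (τ : ℂ)) (-(β κ₀ / d κ₀) * τ) κ₀ :=
      hd.neg.mul_const _
    have := h1.cexp
    convert this using 1
    ring
  -- derivative of the numerator g·E - 1
  have hNder : HasDerivAt (fun κ => g κ * Complex.exp (-(d κ) * τ) - 1)
      ((-2 * g κ₀ / d κ₀) * Complex.exp (-(d κ₀) * τ)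
        + g κ₀ * (-(β κ₀ / d κ₀) * τ * Complex.exp (-(d κ₀) * τ))) κ₀ :=
    (hgder.mul hEder).sub_const 1
  -- derivative of the denominator g - 1
  have hDder : HasDerivAt (fun κ => g κ - 1) (-2 * g κ₀ / d κ₀) κ₀ :=
    hgder.sub_const 1
  have hQder := hNder.div hDder hg1'
  -- derivative of the log term
  have hLder : HasDerivAt
      (fun κ => Complex.log ((g κ * Complex.exp (-(d κ) * τ) - 1) / (g κ - 1)))
      ((2 * g κ₀ / (g κ₀ - 1)
        + g κ₀ * Complex.exp (-(d κ₀) * τ) * (2 + (τ : ℂ) * β κ₀)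
          / (1 - g κ₀ * Complex.exp (-(d κ₀) * τ))) / d κ₀) κ₀ := by
    have h := (Complex.hasDerivAt_log hslit).comp κ₀ hQder
    refine h.congr_deriv ?_
    symm
    rw [inv_div, div_mul_div_comm]
    rw [div_eq_div_iff hd0 (mul_ne_zero hden (pow_ne_zero 2 hg1'))]
    field_simp
    ring
  -- derivative of κθ/σ²
  have hcder : HasDerivAt (fun κ : ℝ => (κ : ℂ) * θ / σ ^ 2) ((θ : ℂ) / σ ^ 2) κ₀ := by
    have h1 : HasDerivAt (fun κ : ℝ => (κ : ℂ)) 1 κ₀ := by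
      simpa using (hasDerivAt_id κ₀).ofReal_comp
    have := (h1.mul_const (θ : ℂ)).div_const ((σ : ℂ) ^ 2)
    simpa using this
  -- derivative of the bracket
  have hinner : HasDerivAt
      (fun κ => (τ : ℂ) * (β κ - d κ)
        - 2 * Complex.log ((g κ * Complex.exp (-(d κ) * τ) - 1) / (g κ - 1)))
      ((τ : ℂ) * (1 - β κ₀ / d κ₀)
        - 2 * ((2 * g κ₀ / (g κ₀ - 1)
          + g κ₀ * Complex.exp (-(d κ₀) * τ) * (2 + (τ : ℂ) * β κ₀)
            / (1 - g κ₀ * Complex.exp (-(d κ₀) * τ))) / d κ₀)) κ₀ :=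
    ((hβ'.sub hd).const_mul (τ : ℂ)).sub (hLder.const_mul 2)
  have hAder := hcder.mul hinner
  have key1 : A κ₀ / (κ₀ : ℂ) = (θ : ℂ) / σ ^ 2 * ((τ : ℂ) * (β κ₀ - d κ₀)
      - 2 * Complex.log ((g κ₀ * Complex.exp (-(d κ₀) * τ) - 1) / (g κ₀ - 1))) := by
    rw [hA κ₀]
    field_simp
  have key2 : (κ₀ : ℂ) * θ / σ ^ 2 *
        ((τ : ℂ) * (1 - β κ₀ / d κ₀)
          - 2 * ((2 * g κ₀ / (g κ₀ - 1)
              + g κ₀ * Complex.exp (-(d κ₀) * τ) * (2 + (τ : ℂ) * β κ₀)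
                / (1 - g κ₀ * Complex.exp (-(d κ₀) * τ))) / d κ₀))
      = -(((κ₀ : ℂ) * θ / (d κ₀ * σ ^ 2)) *
          (-(d κ₀) * τ + (τ : ℂ) * β κ₀ + 4 * g κ₀ / (g κ₀ - 1)
            + 2 * g κ₀ * Complex.exp (-(d κ₀) * τ) * (2 + (τ : ℂ) * β κ₀)
              / (1 - g κ₀ * Complex.exp (-(d κ₀) * τ)))) := by
    exact heston_aux (g κ₀) (Complex.exp (-(d κ₀) * τ)) (d κ₀) (β κ₀) (τ : ℂ)
      (κ₀ : ℂ) (θ : ℂ) ((σ : ℂ) ^ 2) hd0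
  have key : (A κ₀ / (κ₀ : ℂ)
        - ((κ₀ : ℂ) * θ / (d κ₀ * σ ^ 2)) *
          (-(d κ₀) * τ + (τ : ℂ) * β κ₀ + 4 * g κ₀ / (g κ₀ - 1)
            + 2 * g κ₀ * Complex.exp (-(d κ₀) * τ) * (2 + (τ : ℂ) * β κ₀)
              / (1 - g κ₀ * Complex.exp (-(d κ₀) * τ))))
      = (θ : ℂ) / σ ^ 2 * ((τ : ℂ) * (β κ₀ - d κ₀)
          - 2 * Complex.log ((g κ₀ * Complex.exp (-(d κ₀) * τ) - 1) / (g κ₀ - 1)))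
        + (κ₀ : ℂ) * θ / σ ^ 2 *
          ((τ : ℂ) * (1 - β κ₀ / d κ₀)
            - 2 * ((2 * g κ₀ / (g κ₀ - 1)
                + g κ₀ * Complex.exp (-(d κ₀) * τ) * (2 + (τ : ℂ) * β κ₀)
                  / (1 - g κ₀ * Complex.exp (-(d κ₀) * τ))) / d κ₀)) := by
    rw [key1]
    linear_combination -key2
  rw [key, funext hA]
  exact hAder
end

section
/- Fix u ∈ ℂ and reals σ ≠ 0, κ, τ > 0 and ρ₀ ∈ ℝ. Set α̂ = -(1/2)·u·(u + i), γ = σ²/2, and β(ρ) = κ - i·u·σ·ρ for ρ ∈ ℝ. Let d : ℝ → ℂ satisfy HasDerivAt d (-i·u·σ·β(ρ₀)/d(ρ₀)) ρ₀ with d(ρ₀) ≠ 0 and β(ρ₀) + d(ρ₀) ≠ 0, and define g(ρ) = (β(ρ) - d(ρ))/(β(ρ) + d(ρ)). Write β, d, g for the values at ρ₀, and assume g ≠ 1, g·exp(-d·τ) - 1 ≠ 0, and that (g·exp(-d·τ) - 1)/(g - 1) lies in the slit plane. Then the function ρ ↦ Log((g(ρ)·exp(-d(ρ)·τ) - 1)/(g(ρ)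 - 1)) has derivative at ρ₀ equal to (i·u·σ·g/d)·( exp(-d·τ)·(2 + τ·β)/(g·exp(-d·τ) - 1) - 2/(g - 1) ). -/
set_option maxHeartbeats 1000000 in
/-- Derivative with respect to `ρ` of `Log((g e^{-dτ} - 1)/(g - 1))`
(Appendix B.7 of the paper). -/
theorem heston_log_deriv_rho (u : ℂ) (σ κ τ ρ₀ : ℝ) (hσ : σ ≠ 0) (hτ : 0 < τ)
    (β : ℝ → ℂ) (hβ : ∀ ρ : ℝ, β ρ = (κ : ℂ) - Complex.I * u * σ * ρ)
    (d : ℝ → ℂ) (hd : HasDerivAt d (-Complex.I * u * σ * β ρ₀ / d ρ₀) ρ₀)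
    (hd0 : d ρ₀ ≠ 0) (hβd : β ρ₀ + d ρ₀ ≠ 0)
    (g : ℝ → ℂ) (hg : ∀ ρ : ℝ, g ρ = (β ρ - d ρ) / (β ρ + d ρ))
    (hg1 : g ρ₀ ≠ 1)
    (hden : g ρ₀ * Complex.exp (-(d ρ₀) * τ) - 1 ≠ 0)
    (hslit : (g ρ₀ * Complex.exp (-(d ρ₀) * τ) - 1) / (g ρ₀ - 1) ∈ Complex.slitPlane) :
    HasDerivAt (fun ρ : ℝ =>
        Complex.log ((g ρ * Complex.exp (-(d ρ) * τ) - 1) / (g ρ - 1)))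
      ((Complex.I * u * σ * g ρ₀ / d ρ₀) *
        (Complex.exp (-(d ρ₀) * τ) * (2 + (τ : ℂ) * β ρ₀)
            / (g ρ₀ * Complex.exp (-(d ρ₀) * τ) - 1)
          - 2 / (g ρ₀ - 1))) ρ₀ := by
  have hgf : g = fun ρ : ℝ => (β ρ - d ρ) / (β ρ + d ρ) := funext hg
  subst hgf
  have hβf : β = fun ρ : ℝ => (κ : ℂ) - Complex.I * u * σ * ρ := funext hβ
  subst hβf
  simp only at hd hd0 hβd hg1 hden hslit ⊢
  have hcoe : HasDerivAt (fun ρ : ℝ => (ρ : ℂ)) 1 ρ₀ := by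
    simpa using (hasDerivAt_id ρ₀).ofReal_comp
  have hβ' : HasDerivAt (fun ρ : ℝ => (κ : ℂ) - Complex.I * u * σ * ρ)
      (-(Complex.I * u * σ)) ρ₀ := by
    exact ((hasDerivAt_const ρ₀ (κ : ℂ)).sub (hcoe.const_mul (Complex.I * u * σ))).congr_deriv (by ring)
  have hG : HasDerivAt
      (fun ρ : ℝ => ((κ : ℂ) - Complex.I * u * σ * ρ - d ρ) / ((κ : ℂ) - Complex.I * u * σ * ρ + d ρ))
      (2 * Complex.I * u * σ *
        (((κ : ℂ) - Complex.I * u * σ * ρ₀ - d ρ₀) / ((κ : ℂ) - Complex.I * u * σ * ρ₀ + d ρ₀)) / d ρ₀) ρ₀ := by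
    have h := (hβ'.sub hd).div (hβ'.add hd) hβd
    refine h.congr_deriv ?_
    simp only [Pi.sub_apply, Pi.add_apply, Pi.neg_apply]
    field_simp
    ring
  have hE : HasDerivAt (fun ρ : ℝ => Complex.exp (-(d ρ) * τ))
      (Complex.I * u * σ * ((κ : ℂ) - Complex.I * u * σ * ρ₀) * τ / d ρ₀
        * Complex.exp (-(d ρ₀) * τ)) ρ₀ := by
    have h := (hd.neg.mul_const (τ : ℂ)).cexp
    refine h.congr_deriv ?_
    simp only [Pi.sub_apply, Pi.add_apply, Pi.neg_apply]
    field_simp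
  have hN := (hG.mul hE).sub_const 1
  have hF := hN.div (hG.sub_const 1) (sub_ne_zero.mpr hg1)
  have hL := hF.clog_real hslit
  refine hL.congr_deriv ?_
  simp only [Pi.mul_apply, Pi.sub_apply, Pi.div_apply, Pi.neg_apply, Pi.add_apply]
  generalize hE1 : Complex.exp (-(d ρ₀) * (τ : ℂ)) = E at hden ⊢
  generalize hG1 : ((κ : ℂ) - Complex.I * u * σ * ρ₀ - d ρ₀) /
      ((κ : ℂ) - Complex.I * u * σ * ρ₀ + d ρ₀) = G at hg1 hden ⊢
  have hg1' : G - 1 ≠ 0 := sub_ne_zero.mpr hg1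
  generalize hD1 : d ρ₀ = D at hd0 ⊢
  generalize hB1 : (κ : ℂ) - Complex.I * u * σ * ρ₀ = B
  field_simp
end

section
/- Fix u ∈ ℂ and reals σ ≠ 0, κ, θ, τ > 0 and ρ₀ ∈ ℝ. Set α̂ = -(1/2)·u·(u + i), γ = σ²/2, and β(ρ) = κ - i·u·σ·ρ for ρ ∈ ℝ. Let d : ℝ → ℂ satisfy HasDerivAt d (-i·u·σ·β(ρ₀)/d(ρ₀)) ρ₀ with d(ρ₀) ≠ 0 and β(ρ₀) + d(ρ₀) ≠ 0, define g(ρ) = (β(ρ) - d(ρ))/(β(ρ) + d(ρ)), and define A(ρ) = (κ·θ/σ²)·( τ·(β(ρ) - d(ρ)) - 2·Log((g(ρ)·exp(-d(ρ)·τ) - 1)/(g(ρ) - 1)) ). Write β, d, g for the values at ρ₀, assume g ≠ 1, g·exp(-d·τ) - 1 ≠ 0, and that (g·exp(-d·τ) - 1)/(g - 1) lies in the slit plane. Then HasDerivAt A ( (κ·θ·i·u/(d·σ))·( τ·(β - d) - 2·g·( exp(-d·τ)·(2 + τ·β)/(g·exp(-d·τ) - 1) - 2/(g - 1) ) ) )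 ρ₀. -/
private lemma heston_quot (N D N' D' : ℂ) (hN : N ≠ 0) (hD : D ≠ 0) :
    (N' * D - N * D') / D ^ 2 / (N / D) = N' / N - D' / D := by
  field_simp

private lemma heston_key (K c dd b gg E N D t : ℂ)
    (hdd : dd ≠ 0) (hN : N ≠ 0) (hD : D ≠ 0) :
    K * -c / dd * (t * (b - dd) - 2 * gg * (E * (2 + t * b) / N - 2 / D))
      = K * (t * (c - c * b / dd)
          - 2 * (-(c * gg / dd) * (2 + t * b) * E / N - -2 * c * gg / dd / D)) := by
  field_simp
  ring

set_option maxHeartbeats 1000000 in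
/-- Derivative of the component `A` of the Heston characteristic function with
respect to the correlation `ρ` (Equation (38) of the paper). -/
theorem heston_A_deriv_rho (u : ℂ) (σ κ θ τ ρ₀ : ℝ) (hσ : σ ≠ 0) (hτ : 0 < τ)
    (β : ℝ → ℂ) (hβ : ∀ ρ : ℝ, β ρ = (κ : ℂ) - Complex.I * u * σ * ρ)
    (d : ℝ → ℂ) (hd : HasDerivAt d (-Complex.I * u * σ * β ρ₀ / d ρ₀) ρ₀)
    (hd0 : d ρ₀ ≠ 0) (hβd : β ρ₀ + d ρ₀ ≠ 0)
    (g : ℝ → ℂ) (hg : ∀ ρ : ℝ, g ρ = (β ρ - d ρ) / (β ρ + d ρ))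
    (A : ℝ → ℂ)
    (hA : ∀ ρ : ℝ, A ρ = ((κ : ℂ) * θ / σ ^ 2) *
        ((τ : ℂ) * (β ρ - d ρ)
          - 2 * Complex.log ((g ρ * Complex.exp (-(d ρ) * τ) - 1) / (g ρ - 1))))
    (hg1 : g ρ₀ ≠ 1)
    (hden : g ρ₀ * Complex.exp (-(d ρ₀) * τ) - 1 ≠ 0)
    (hslit : (g ρ₀ * Complex.exp (-(d ρ₀) * τ) - 1) / (g ρ₀ - 1) ∈ Complex.slitPlane) :
    HasDerivAt A
      (((κ : ℂ) * θ * Complex.I * u / (d ρ₀ * σ)) *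
        ((τ : ℂ) * (β ρ₀ - d ρ₀)
          - 2 * g ρ₀ *
            (Complex.exp (-(d ρ₀) * τ) * (2 + (τ : ℂ) * β ρ₀)
                / (g ρ₀ * Complex.exp (-(d ρ₀) * τ) - 1)
              - 2 / (g ρ₀ - 1)))) ρ₀ := by
  have hσC : (σ : ℂ) ≠ 0 := Complex.ofReal_ne_zero.mpr hσ
  have hg1' : g ρ₀ - 1 ≠ 0 := sub_ne_zero.mpr hg1
  set c : ℂ := -Complex.I * u * σ with hc
  have hβfun : β = fun ρ : ℝ => (κ : ℂ) + c * (ρ : ℂ) := by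
    funext ρ; rw [hβ]; ring
  have hβ' : HasDerivAt β c ρ₀ := by
    rw [hβfun]
    simpa using (((hasDerivAt_id ρ₀).ofReal_comp).const_mul c).const_add (κ : ℂ)
  have hgfun : g = fun ρ : ℝ => (β ρ - d ρ) / (β ρ + d ρ) := funext hg
  -- derivative of g, raw form
  have hg2 : HasDerivAt g
      (((c - c * β ρ₀ / d ρ₀) * (β ρ₀ + d ρ₀) -
        (β ρ₀ - d ρ₀) * (c + c * β ρ₀ / d ρ₀)) / (β ρ₀ + d ρ₀) ^ 2) ρ₀ := by
    rw [hgfun]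
    exact (hβ'.sub hd).div (hβ'.add hd) hβd
  -- derivative of g, closed form
  have hg' : HasDerivAt g (-2 * c * g ρ₀ / d ρ₀) ρ₀ := by
    convert hg2 using 1
    rw [hg ρ₀]
    field_simp
    ring
  have hE : HasDerivAt (fun ρ : ℝ => Complex.exp (-(d ρ) * (τ : ℂ)))
      (Complex.exp (-(d ρ₀) * (τ : ℂ)) * (-(c * β ρ₀ / d ρ₀) * (τ : ℂ))) ρ₀ :=
    (hd.neg.mul_const (τ : ℂ)).cexp
  -- derivative of numerator, closed form
  have hN : HasDerivAt (fun ρ : ℝ => g ρ * Complex.exp (-(d ρ) * (τ : ℂ)) - 1)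
      (-(c * g ρ₀ / d ρ₀) * (2 + (τ : ℂ) * β ρ₀) * Complex.exp (-(d ρ₀) * (τ : ℂ))) ρ₀ := by
    convert (hg'.mul hE).sub_const 1 using 1
    · rfl
    · rfl
    ring
  have hD : HasDerivAt (fun ρ : ℝ => g ρ - 1) (-2 * c * g ρ₀ / d ρ₀) ρ₀ :=
    hg'.sub_const 1
  have hquot : HasDerivAt
      (fun ρ : ℝ => (g ρ * Complex.exp (-(d ρ) * (τ : ℂ)) - 1) / (g ρ - 1))
      ((-(c * g ρ₀ / d ρ₀) * (2 + (τ : ℂ) * β ρ₀) * Complex.exp (-(d ρ₀) * (τ : ℂ)) *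
          (g ρ₀ - 1) -
        (g ρ₀ * Complex.exp (-(d ρ₀) * (τ : ℂ)) - 1) * (-2 * c * g ρ₀ / d ρ₀)) /
        (g ρ₀ - 1) ^ 2) ρ₀ := hN.div hD hg1'
  -- derivative of the log term, simplified to N'/N - D'/D
  have hlog : HasDerivAt
      (fun ρ : ℝ => Complex.log ((g ρ * Complex.exp (-(d ρ) * (τ : ℂ)) - 1) / (g ρ - 1)))
      (-(c * g ρ₀ / d ρ₀) * (2 + (τ : ℂ) * β ρ₀) * Complex.exp (-(d ρ₀) * (τ : ℂ)) /
          (g ρ₀ * Complex.exp (-(d ρ₀) * (τ : ℂ)) - 1) -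
        (-2 * c * g ρ₀ / d ρ₀) / (g ρ₀ - 1)) ρ₀ := by
    convert hquot.clog_real hslit using 1
    exact (heston_quot _ _ _ _ hden hg1').symm
  have hAfun : A = fun ρ : ℝ => ((κ : ℂ) * θ / σ ^ 2) *
      ((τ : ℂ) * (β ρ - d ρ)
        - 2 * Complex.log ((g ρ * Complex.exp (-(d ρ) * (τ : ℂ)) - 1) / (g ρ - 1))) :=
    funext hA
  have hmain : HasDerivAt A
      (((κ : ℂ) * θ / σ ^ 2) *
        ((τ : ℂ) * (c - c * β ρ₀ / d ρ₀)
          - 2 * (-(c * g ρ₀ / d ρ₀) * (2 + (τ : ℂ) * β ρ₀) *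
              Complex.exp (-(d ρ₀) * (τ : ℂ)) /
                (g ρ₀ * Complex.exp (-(d ρ₀) * (τ : ℂ)) - 1) -
              (-2 * c * g ρ₀ / d ρ₀) / (g ρ₀ - 1)))) ρ₀ := by
    rw [hAfun]
    have := (((hβ'.sub hd).const_mul (τ : ℂ)).sub (hlog.const_mul 2)).const_mul
      ((κ : ℂ) * θ / σ ^ 2)
    exact this
  convert hmain using 1
  have hK : (κ : ℂ) * θ * Complex.I * u / (d ρ₀ * σ)
      = (κ : ℂ) * θ / σ ^ 2 * -c / d ρ₀ := by
    rw [hc]; field_simp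
  rw [hK]
  exact heston_key _ _ _ _ _ _ _ _ _ hd0 hden hg1'
end

section
/- Fix u ∈ ℂ and reals σ ≠ 0, κ, τ > 0 and ρ₀ ∈ ℝ. Set α̂ = -(1/2)·u·(u + i), γ = σ²/2, and β(ρ) = κ - i·u·σ·ρ for ρ ∈ ℝ. Let d : ℝ → ℂ satisfy HasDerivAt d (-i·u·σ·β(ρ₀)/d(ρ₀)) ρ₀ with d(ρ₀) ≠ 0 and β(ρ₀) + d(ρ₀) ≠ 0, define g(ρ) = (β(ρ) - d(ρ))/(β(ρ) + d(ρ)), and define B(ρ) = ((β(ρ) - d(ρ))/σ²)·(1 - exp(-d(ρ)·τ))/(1 - g(ρ)·exp(-d(ρ)·τ)). Write β, d, g for the values at ρ₀, and assume 1 - exp(-d·τ) ≠ 0 and 1 - g·exp(-d·τ) ≠ 0. Then HasDerivAt B ( (i·u·σ/d)·B(ρ₀)·( 1 + exp(-d·τ)·( -τ·β/(1 - exp(-d·τ)) + g·(2 + τ·β)/(1 - g·exp(-d·τ)) ) ) ) ρ₀. -/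
set_option maxHeartbeats 1000000 in
private lemma heston_B_deriv_rho_aux (c c' b D E s t G : ℂ) (hc : c' = -c) (hs : s ≠ 0)
    (hD : D ≠ 0) (h1 : 1 - E ≠ 0) (h2 : 1 - G * E ≠ 0) :
    c / D * ((b - D) / s ^ 2 * (1 - E) / (1 - G * E)) *
      (1 + E * (-(t * b) / (1 - E) + G * (2 + t * b) / (1 - G * E))) =
    (((-c - c' * b / D) / s ^ 2 * (1 - E) + (b - D) / s ^ 2 * -(E * (-(c' * b / D) * t)))
        * (1 - G * E)
      - (b - D) / s ^ 2 * (1 - E) * -(2 * c * G / D * E + G * (E * (-(c' * b / D) * t))))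
      / (1 - G * E) ^ 2 := by
  subst hc
  rw [eq_div_iff (pow_ne_zero 2 h2), div_add_div _ _ h1 h2]
  field_simp [hD, hs, h1, h2, sub_ne_zero, (by rwa [mul_comm] at h2 : 1 - E * G ≠ 0)]
  ring

set_option maxHeartbeats 1000000 in
/-- Derivative of the component `B` of the Heston characteristic function with
respect to the correlation `ρ` (Equation (39) of the paper). -/
theorem heston_B_deriv_rho (u : ℂ) (σ κ τ ρ₀ : ℝ) (hσ : σ ≠ 0) (hτ : 0 < τ)
    (β : ℝ → ℂ) (hβ : ∀ ρ : ℝ, β ρ = (κ : ℂ) - Complex.I * u * σ * ρ)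
    (d : ℝ → ℂ) (hd : HasDerivAt d (-Complex.I * u * σ * β ρ₀ / d ρ₀) ρ₀)
    (hd0 : d ρ₀ ≠ 0) (hβd : β ρ₀ + d ρ₀ ≠ 0)
    (g : ℝ → ℂ) (hg : ∀ ρ : ℝ, g ρ = (β ρ - d ρ) / (β ρ + d ρ))
    (B : ℝ → ℂ)
    (hB : ∀ ρ : ℝ, B ρ = ((β ρ - d ρ) / (σ : ℂ) ^ 2) *
        (1 - Complex.exp (-(d ρ) * τ)) / (1 - g ρ * Complex.exp (-(d ρ) * τ)))
    (hnum : 1 - Complex.exp (-(d ρ₀) * τ) ≠ 0)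
    (hden : 1 - g ρ₀ * Complex.exp (-(d ρ₀) * τ) ≠ 0) :
    HasDerivAt B
      ((Complex.I * u * σ / d ρ₀) * B ρ₀ *
        (1 + Complex.exp (-(d ρ₀) * τ) *
          (-((τ : ℂ) * β ρ₀) / (1 - Complex.exp (-(d ρ₀) * τ))
            + g ρ₀ * (2 + (τ : ℂ) * β ρ₀)
              / (1 - g ρ₀ * Complex.exp (-(d ρ₀) * τ))))) ρ₀ := by
  have hσc : (σ : ℂ) ≠ 0 := Complex.ofReal_ne_zero.mpr hσ
  -- derivative of β
  have hβ' : HasDerivAt β (-(Complex.I * u * σ)) ρ₀ := by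
    have h1 : HasDerivAt (fun ρ : ℝ => (ρ : ℂ)) 1 ρ₀ := by
      simpa using (hasDerivAt_id ρ₀).ofReal_comp
    have h2 : HasDerivAt (fun ρ : ℝ => (κ : ℂ) - Complex.I * u * σ * ρ)
        (-(Complex.I * u * σ)) ρ₀ := by
      simpa using ((h1.const_mul (Complex.I * u * (σ:ℂ))).const_sub (κ : ℂ))
    exact (funext hβ : β = _) ▸ h2
  -- derivative of the exponential factor
  have hE : HasDerivAt (fun ρ : ℝ => Complex.exp (-(d ρ) * τ))
      (Complex.exp (-(d ρ₀) * τ) * (-(-Complex.I * u * σ * β ρ₀ / d ρ₀) * τ)) ρ₀ :=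
    (hd.neg.mul_const (τ : ℂ)).cexp
  -- derivative of g, simplified
  have hg2 : HasDerivAt g (2 * (Complex.I * u * σ) * g ρ₀ / d ρ₀) ρ₀ := by
    have hraw : HasDerivAt g
        (((-(Complex.I * u * σ) - -Complex.I * u * σ * β ρ₀ / d ρ₀) * (β ρ₀ + d ρ₀)
          - (β ρ₀ - d ρ₀) * (-(Complex.I * u * σ) + -Complex.I * u * σ * β ρ₀ / d ρ₀))
          / (β ρ₀ + d ρ₀) ^ 2) ρ₀ := by
      have := (hβ'.sub hd).div (hβ'.add hd) hβd
      exact (funext hg : g = _) ▸ this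
    convert hraw using 1
    rw [hg]
    field_simp
    ring
  -- derivative of numerator part
  have hN : HasDerivAt (fun ρ : ℝ => ((β ρ - d ρ) / (σ : ℂ) ^ 2) *
      (1 - Complex.exp (-(d ρ) * τ)))
      (((-(Complex.I * u * σ) - -Complex.I * u * σ * β ρ₀ / d ρ₀) / (σ : ℂ) ^ 2) *
        (1 - Complex.exp (-(d ρ₀) * τ))
       + ((β ρ₀ - d ρ₀) / (σ : ℂ) ^ 2) *
        (-(Complex.exp (-(d ρ₀) * τ) * (-(-Complex.I * u * σ * β ρ₀ / d ρ₀) * τ)))) ρ₀ :=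
    ((hβ'.sub hd).div_const ((σ : ℂ) ^ 2)).mul (hE.const_sub 1)
  -- derivative of the denominator 1 - g * E
  have hD : HasDerivAt (fun ρ : ℝ => 1 - g ρ * Complex.exp (-(d ρ) * τ))
      (-((2 * (Complex.I * u * σ) * g ρ₀ / d ρ₀) * Complex.exp (-(d ρ₀) * τ)
        + g ρ₀ * (Complex.exp (-(d ρ₀) * τ) * (-(-Complex.I * u * σ * β ρ₀ / d ρ₀) * τ)))) ρ₀ :=
    (hg2.mul hE).const_sub 1
  have hBfull := hN.div hD hden
  have hBeq : B = fun ρ : ℝ => ((β ρ - d ρ) / (σ : ℂ) ^ 2) *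
      (1 - Complex.exp (-(d ρ) * τ)) / (1 - g ρ * Complex.exp (-(d ρ) * τ)) := funext hB
  rw [hBeq]
  refine hBfull.congr_deriv ?_
  exact Eq.symm <| heston_B_deriv_rho_aux (Complex.I * u * σ) (-Complex.I * u * σ) (β ρ₀) (d ρ₀)
    (Complex.exp (-(d ρ₀) * τ)) (σ : ℂ) (τ : ℂ) (g ρ₀) (by ring) hσc hd0 hnum hden
end

section
/- Fix u ∈ ℂ and reals κ, ρ, τ > 0 and σ₀ ∈ ℝ with σ₀ ≠ 0. Set α̂ = -(1/2)·u·(u + i), and for σ ∈ ℝ set β(σ) = κ - i·u·σ·ρ and γ(σ) = σ²/2. Let d : ℝ → ℂ satisfy HasDerivAt d (-(i·u·ρ·β(σ₀) + 2·α̂·σ₀)/d(σ₀)) σ₀ with d(σ₀) ≠ 0 and β(σ₀) + d(σ₀) ≠ 0, and define g(σ) = (β(σ) - d(σ))/(β(σ) + d(σ)). Write β, d, g for the values at σ₀, and assume g ≠ 1, g·exp(-d·τ) - 1 ≠ 0, and that (g·exp(-d·τ) - 1)/(g - 1) lies in the slit plane. Then the function σ ↦ Log((g(σ)·exp(-d(σ)·τ)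 - 1)/(g(σ) - 1)) has derivative at σ₀ equal to ( (2·i·u·ρ·(β² - d²) + 4·β·α̂·σ₀)·( (g - 1)·exp(-d·τ) - g·exp(-d·τ) + 1 ) + τ·g·(g - 1)·exp(-d·τ)·(β + d)²·(i·u·ρ·β + 2·α̂·σ₀) ) / ( d·(β + d)²·(g - 1)·(g·exp(-d·τ) - 1) ). -/
set_option maxHeartbeats 1000000 in
private lemma heston_key_identity (B D G E T P N : ℂ) (hd0 : D ≠ 0) (hβd : B + D ≠ 0)
    (hg1' : G - 1 ≠ 0) (hden : G * E - 1 ≠ 0) :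
    (N * ((G - 1) * E - G * E + 1) + T * G * (G - 1) * E * (B + D) ^ 2 * P)
        / (D * (B + D) ^ 2 * (G - 1) * (G * E - 1))
      = ((N / (D * (B + D) ^ 2) * E + G * (-(-(P) / D) * T * E)) * (G - 1)
            - (G * E - 1) * (N / (D * (B + D) ^ 2))) / (G - 1) ^ 2
          / ((G * E - 1) / (G - 1)) := by
  have hW : D * (B + D) ^ 2 ≠ 0 := mul_ne_zero hd0 (pow_ne_zero _ hβd)
  rw [div_div_eq_mul_div, div_eq_div_iff
    (mul_ne_zero (mul_ne_zero hW hg1') hden) hden]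
  field_simp
  ring

set_option maxHeartbeats 2000000 in


/-- Derivative with respect to the vol-of-vol `σ` of
`Log((g e^{-dτ} - 1)/(g - 1))` (Equation (42) of the paper). -/
theorem heston_log_deriv_sigma (u : ℂ) (κ ρ τ σ₀ : ℝ) (hτ : 0 < τ) (hσ₀ : σ₀ ≠ 0)
    (α : ℂ) (hα : α = -(1/2) * u * (u + Complex.I))
    (β : ℝ → ℂ) (hβ : ∀ σ : ℝ, β σ = (κ : ℂ) - Complex.I * u * σ * ρ)
    (d : ℝ → ℂ)
    (hd : HasDerivAt d (-(Complex.I * u * ρ * β σ₀ + 2 * α * σ₀) / d σ₀) σ₀)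
    (hd0 : d σ₀ ≠ 0) (hβd : β σ₀ + d σ₀ ≠ 0)
    (g : ℝ → ℂ) (hg : ∀ σ : ℝ, g σ = (β σ - d σ) / (β σ + d σ))
    (hg1 : g σ₀ ≠ 1)
    (hden : g σ₀ * Complex.exp (-(d σ₀) * τ) - 1 ≠ 0)
    (hslit : (g σ₀ * Complex.exp (-(d σ₀) * τ) - 1) / (g σ₀ - 1) ∈ Complex.slitPlane) :
    HasDerivAt (fun σ : ℝ =>
        Complex.log ((g σ * Complex.exp (-(d σ) * τ) - 1) / (g σ - 1)))
      (((2 * Complex.I * u * ρ * (β σ₀ ^ 2 - d σ₀ ^ 2) + 4 * β σ₀ * α * σ₀) *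
          ((g σ₀ - 1) * Complex.exp (-(d σ₀) * τ)
            - g σ₀ * Complex.exp (-(d σ₀) * τ) + 1)
        + (τ : ℂ) * g σ₀ * (g σ₀ - 1) * Complex.exp (-(d σ₀) * τ)
            * (β σ₀ + d σ₀) ^ 2 * (Complex.I * u * ρ * β σ₀ + 2 * α * σ₀))
      / (d σ₀ * (β σ₀ + d σ₀) ^ 2 * (g σ₀ - 1)
          * (g σ₀ * Complex.exp (-(d σ₀) * τ) - 1))) σ₀ := by
  have hg1' : g σ₀ - 1 ≠ 0 := sub_ne_zero.mpr hg1
  set B := β σ₀ with hB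
  set D := d σ₀ with hD
  set G := g σ₀ with hG
  set E := Complex.exp (-D * τ) with hE
  set D' : ℂ := -(Complex.I * u * ρ * B + 2 * α * σ₀) / D with hD'
  -- derivative of β
  have hβ' : HasDerivAt β (-(Complex.I * u * ρ)) σ₀ := by
    have h1 : HasDerivAt (fun σ : ℝ => (σ : ℂ)) 1 σ₀ :=
      Complex.ofRealCLM.hasDerivAt
    have h2 : HasDerivAt (fun σ : ℝ => (κ : ℂ) - Complex.I * u * σ * ρ)
        (-(Complex.I * u * ρ)) σ₀ := by
      have := ((h1.const_mul (Complex.I * u)).mul_const (ρ : ℂ)).const_sub (κ : ℂ)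
      simpa [mul_assoc, mul_comm, mul_left_comm] using this
    have : β = fun σ : ℝ => (κ : ℂ) - Complex.I * u * σ * ρ := funext hβ
    rw [this]; exact h2
  set B' : ℂ := -(Complex.I * u * ρ) with hB'
  set G' : ℂ := ((B' - D') * (B + D) - (B - D) * (B' + D')) / (B + D) ^ 2 with hG'
  -- derivative of g
  have hg' : HasDerivAt g G' σ₀ := by
    have h := (hβ'.sub hd).div (hβ'.add hd) hβd
    have hfun : g = fun σ => (β σ - d σ) / (β σ + d σ) := funext hg
    rw [hfun]; exact h
  -- derivative of exp(-d σ * τ)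
  have hexp : HasDerivAt (fun σ : ℝ => Complex.exp (-(d σ) * τ)) (-D' * τ * E) σ₀ := by
    have := ((hd.neg.mul_const (τ : ℂ)).cexp)
    simpa [hE, mul_comm, mul_left_comm, mul_assoc] using this
  -- derivative of numerator
  have hnum : HasDerivAt (fun σ : ℝ => g σ * Complex.exp (-(d σ) * τ) - 1)
      (G' * E + G * (-D' * τ * E)) σ₀ := by
    have := (hg'.mul hexp).sub_const 1
    simpa [hG, hE] using this
  -- derivative of denominator
  have hdenf : HasDerivAt (fun σ : ℝ => g σ - 1) G' σ₀ := hg'.sub_const 1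
  -- quotient
  have hquot : HasDerivAt
      (fun σ : ℝ => (g σ * Complex.exp (-(d σ) * τ) - 1) / (g σ - 1))
      (((G' * E + G * (-D' * τ * E)) * (G - 1) - (G * E - 1) * G') / (G - 1) ^ 2) σ₀ := by
    have := hnum.div hdenf hg1'
    exact this
  have hlog := hquot.clog_real hslit
  have hG'' : G' = (2 * Complex.I * u * ρ * (B ^ 2 - D ^ 2) + 4 * B * α * σ₀)
      / (D * (B + D) ^ 2) := by
    have hGval : G = (B - D) / (B + D) := hg σ₀
    rw [hG', hD', hB']
    field_simp
    ring
  have hD'' : D' = -(Complex.I * u * ρ * B + 2 * α * σ₀) / D := hD'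
  rw [show g σ₀ * Complex.exp (-(d σ₀) * (τ : ℂ)) - 1 = G * E - 1 from rfl,
      show g σ₀ - 1 = G - 1 from rfl] at hlog
  convert hlog using 1
  rw [hG'', hD'']
  exact heston_key_identity B D G E τ (Complex.I * u * ρ * B + 2 * α * σ₀)
    (2 * Complex.I * u * ρ * (B ^ 2 - D ^ 2) + 4 * B * α * σ₀) hd0 hβd hg1' hden
end

section
/- Fix u ∈ ℂ and reals κ, ρ, τ > 0 and σ₀ ∈ ℝ with σ₀ ≠ 0. Set α̂ = -(1/2)·u·(u + i), and for σ ∈ ℝ set β(σ) = κ - i·u·σ·ρ and γ(σ) = σ²/2. Let d : ℝ → ℂ satisfy HasDerivAt d (-(i·u·ρ·β(σ₀) + 2·α̂·σ₀)/d(σ₀)) σ₀ with d(σ₀) ≠ 0 and β(σ₀) + d(σ₀) ≠ 0, and define g(σ) = (β(σ) - d(σ))/(β(σ) + d(σ)). Write β, d, g for the values at σ₀ and assume 1 - g·exp(-d·τ) ≠ 0. Then the function σ ↦ (1 - exp(-d(σ)·τ))/(1 - g(σ)·exp(-d(σ)·τ)) has derivative at σ₀ equal to ( exp(-d·τ)·(i·u·ρ·β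 + 2·α̂·σ₀)·( -τ·(β + d)²·(1 - g·exp(-d·τ)) + (1 - exp(-d·τ))·(2·β + τ·g·(β + d)²) ) - 2·i·u·ρ·d²·exp(-d·τ)·(1 - exp(-d·τ)) ) / ( d·(β + d)²·(1 - g·exp(-d·τ))² ). -/
set_option maxHeartbeats 1000000

theorem heston_aux_s15 (B D E T G X R : ℂ) (hD : D ≠ 0) (hBD : B + D ≠ 0)
    (hQ : 1 - G * E ≠ 0) :
    (E * X * (-T * (B + D) ^ 2 * (1 - G * E) + (1 - E) * (2 * B + T * G * (B + D) ^ 2))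
        - 2 * R * D ^ 2 * E * (1 - E)) / (D * (B + D) ^ 2 * (1 - G * E) ^ 2)
    = (-(X * T * E / D) * (1 - G * E)
        - (1 - E) * -((2 * X * B - 2 * R * D ^ 2) / (D * (B + D) ^ 2) * E
            + G * (X * T * E / D))) / (1 - G * E) ^ 2 := by
  rw [div_eq_div_iff (mul_ne_zero (mul_ne_zero hD (pow_ne_zero 2 hBD)) (pow_ne_zero 2 hQ))
    (pow_ne_zero 2 hQ)]
  field_simp [hD, hBD]
  ring


/-- Derivative with respect to the vol-of-vol `σ` of
`(1 - e^{-dτ})/(1 - g e^{-dτ})` (Equation (45) of the paper). -/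
theorem heston_quot_deriv_sigma (u : ℂ) (κ ρ τ σ₀ : ℝ) (hτ : 0 < τ) (hσ₀ : σ₀ ≠ 0)
    (α : ℂ) (hα : α = -(1/2) * u * (u + Complex.I))
    (β : ℝ → ℂ) (hβ : ∀ σ : ℝ, β σ = (κ : ℂ) - Complex.I * u * σ * ρ)
    (d : ℝ → ℂ)
    (hd : HasDerivAt d (-(Complex.I * u * ρ * β σ₀ + 2 * α * σ₀) / d σ₀) σ₀)
    (hd0 : d σ₀ ≠ 0) (hβd : β σ₀ + d σ₀ ≠ 0)
    (g : ℝ → ℂ) (hg : ∀ σ : ℝ, g σ = (β σ - d σ) / (β σ + d σ))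
    (hden : 1 - g σ₀ * Complex.exp (-(d σ₀) * τ) ≠ 0) :
    HasDerivAt (fun σ : ℝ =>
        (1 - Complex.exp (-(d σ) * τ)) / (1 - g σ * Complex.exp (-(d σ) * τ)))
      ((Complex.exp (-(d σ₀) * τ) * (Complex.I * u * ρ * β σ₀ + 2 * α * σ₀) *
          (-(τ : ℂ) * (β σ₀ + d σ₀) ^ 2
              * (1 - g σ₀ * Complex.exp (-(d σ₀) * τ))
            + (1 - Complex.exp (-(d σ₀) * τ))
              * (2 * β σ₀ + (τ : ℂ) * g σ₀ * (β σ₀ + d σ₀) ^ 2))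
        - 2 * Complex.I * u * ρ * d σ₀ ^ 2 * Complex.exp (-(d σ₀) * τ)
            * (1 - Complex.exp (-(d σ₀) * τ)))
      / (d σ₀ * (β σ₀ + d σ₀) ^ 2
          * (1 - g σ₀ * Complex.exp (-(d σ₀) * τ)) ^ 2)) σ₀ := by
  set R : ℂ := Complex.I * u * ρ with hR
  set X : ℂ := R * β σ₀ + 2 * α * σ₀ with hX
  -- derivative of β
  have hcoe : HasDerivAt (fun σ : ℝ => (σ : ℂ)) 1 σ₀ := by
    exact Complex.ofRealCLM.hasDerivAt (x := σ₀)
  have hβ' : HasDerivAt β (-R) σ₀ := by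
    have h0 : HasDerivAt (fun σ : ℝ => (κ : ℂ) - Complex.I * u * σ * ρ) (-R) σ₀ := by
      have h1 := ((hcoe.const_mul (Complex.I * u)).mul_const (ρ : ℂ))
      have h2 := (hasDerivAt_const σ₀ (κ : ℂ)).sub h1
      refine h2.congr_deriv ?_
      rw [hR]; ring
    exact (funext hβ : β = _) ▸ h0
  -- derivative of exp(-dτ), cleaned
  have hE : HasDerivAt (fun σ : ℝ => Complex.exp (-(d σ) * τ))
      (X * τ * Complex.exp (-(d σ₀) * τ) / d σ₀) σ₀ := by
    have := (hd.neg.mul_const (τ : ℂ)).cexp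
    refine this.congr_deriv ?_
    simp only [Pi.neg_apply]
    field_simp
  -- derivative of g, cleaned
  have hg' : HasDerivAt g
      ((2 * X * β σ₀ - 2 * R * d σ₀ ^ 2) / (d σ₀ * (β σ₀ + d σ₀) ^ 2)) σ₀ := by
    have h0 := (hβ'.sub hd).div (hβ'.add hd) hβd
    have h1 : g = fun σ => (β σ - d σ) / (β σ + d σ) := funext hg
    rw [h1]
    refine h0.congr_deriv ?_
    simp only [Pi.add_apply, Pi.sub_apply]
    field_simp
    ring
  have hN : HasDerivAt (fun σ : ℝ => 1 - Complex.exp (-(d σ) * τ))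
      (-(X * τ * Complex.exp (-(d σ₀) * τ) / d σ₀)) σ₀ := by
    exact ((hasDerivAt_const σ₀ (1 : ℂ)).sub hE).congr_deriv (by ring)
  have hD : HasDerivAt (fun σ : ℝ => 1 - g σ * Complex.exp (-(d σ) * τ))
      (-((2 * X * β σ₀ - 2 * R * d σ₀ ^ 2) / (d σ₀ * (β σ₀ + d σ₀) ^ 2)
            * Complex.exp (-(d σ₀) * τ)
          + g σ₀ * (X * τ * Complex.exp (-(d σ₀) * τ) / d σ₀))) σ₀ := by
    exact ((hasDerivAt_const σ₀ (1 : ℂ)).sub (hg'.mul hE)).congr_deriv (by ring)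
  have hfin := hN.div hD hden
  refine hfin.congr_deriv ?_
  linear_combination (-1 : ℂ) * heston_aux_s15 (β σ₀) (d σ₀) (Complex.exp (-(d σ₀) * τ)) (τ : ℂ) (g σ₀)
    X R hd0 hβd hden
end

section
/- Fix u ∈ ℂ and reals κ, θ, ρ, τ > 0 and σ₀ ∈ ℝ with σ₀ ≠ 0. Set α̂ = -(1/2)·u·(u + i), and for σ ∈ ℝ set β(σ) = κ - i·u·σ·ρ and γ(σ) = σ²/2. Let d : ℝ → ℂ satisfy HasDerivAt d (-(i·u·ρ·β(σ₀) + 2·α̂·σ₀)/d(σ₀)) σ₀ with d(σ₀) ≠ 0 and β(σ₀) + d(σ₀) ≠ 0, define g(σ) = (β(σ) - d(σ))/(β(σ) + d(σ)), and define A(σ) = (κ·θ/σ²)·( τ·(β(σ) - d(σ)) - 2·Log((g(σ)·exp(-d(σ)·τ) - 1)/(g(σ) - 1)) ). Write β, d, g for the values at σ₀, assume g ≠ 1, g·exp(-d·τ) - 1 ≠ 0, and that (g·exp(-d·τ) - 1)/(g - 1) lies in the slit plane. Let L := ( (2·i·u·ρ·(β² - d²) + 4·β·α̂·σ₀)·((g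 - 1)·exp(-d·τ) - g·exp(-d·τ) + 1) + τ·g·(g - 1)·exp(-d·τ)·(β + d)²·(i·u·ρ·β + 2·α̂·σ₀) ) / ( d·(β + d)²·(g - 1)·(g·exp(-d·τ) - 1) ). Then HasDerivAt A ( -2·A(σ₀)/σ₀ + (κ·θ/σ₀²)·( -i·u·τ·ρ + (τ/d)·(i·u·ρ·β + 2·α̂·σ₀) - 2·L ) ) σ₀. -/
set_option maxHeartbeats 1000000 in
/-- Derivative of the component `A` of the Heston characteristic function with
respect to the vol-of-vol `σ` (Equation (41) of the paper, with Equation (42)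
substituted for the log-derivative `L`). -/
theorem heston_A_deriv_sigma (u : ℂ) (κ θ ρ τ σ₀ : ℝ) (hτ : 0 < τ) (hσ₀ : σ₀ ≠ 0)
    (α : ℂ) (hα : α = -(1/2) * u * (u + Complex.I))
    (β : ℝ → ℂ) (hβ : ∀ σ : ℝ, β σ = (κ : ℂ) - Complex.I * u * σ * ρ)
    (d : ℝ → ℂ)
    (hd : HasDerivAt d (-(Complex.I * u * ρ * β σ₀ + 2 * α * σ₀) / d σ₀) σ₀)
    (hd0 : d σ₀ ≠ 0) (hβd : β σ₀ + d σ₀ ≠ 0)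
    (g : ℝ → ℂ) (hg : ∀ σ : ℝ, g σ = (β σ - d σ) / (β σ + d σ))
    (A : ℝ → ℂ)
    (hA : ∀ σ : ℝ, A σ = ((κ : ℂ) * θ / (σ : ℂ) ^ 2) *
        ((τ : ℂ) * (β σ - d σ)
          - 2 * Complex.log ((g σ * Complex.exp (-(d σ) * τ) - 1) / (g σ - 1))))
    (hg1 : g σ₀ ≠ 1)
    (hden : g σ₀ * Complex.exp (-(d σ₀) * τ) - 1 ≠ 0)
    (hslit : (g σ₀ * Complex.exp (-(d σ₀) * τ) - 1) / (g σ₀ - 1) ∈ Complex.slitPlane)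
    (L : ℂ)
    (hL : L = ((2 * Complex.I * u * ρ * (β σ₀ ^ 2 - d σ₀ ^ 2)
            + 4 * β σ₀ * α * σ₀) *
          ((g σ₀ - 1) * Complex.exp (-(d σ₀) * τ)
            - g σ₀ * Complex.exp (-(d σ₀) * τ) + 1)
        + (τ : ℂ) * g σ₀ * (g σ₀ - 1) * Complex.exp (-(d σ₀) * τ)
            * (β σ₀ + d σ₀) ^ 2 * (Complex.I * u * ρ * β σ₀ + 2 * α * σ₀))
      / (d σ₀ * (β σ₀ + d σ₀) ^ 2 * (g σ₀ - 1)
          * (g σ₀ * Complex.exp (-(d σ₀) * τ) - 1))) :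
    HasDerivAt A
      (-2 * A σ₀ / σ₀
        + ((κ : ℂ) * θ / (σ₀ : ℂ) ^ 2) *
          (-(Complex.I * u * τ * ρ)
            + ((τ : ℂ) / d σ₀) * (Complex.I * u * ρ * β σ₀ + 2 * α * σ₀)
            - 2 * L)) σ₀ := by
  have hβf : β = fun σ : ℝ => (κ : ℂ) - Complex.I * u * σ * ρ := funext hβ
  have hgf : g = fun σ : ℝ => (β σ - d σ) / (β σ + d σ) := funext hg
  have hAf : A = fun σ : ℝ => ((κ : ℂ) * θ / (σ : ℂ) ^ 2) *
        ((τ : ℂ) * (β σ - d σ)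
          - 2 * Complex.log ((g σ * Complex.exp (-(d σ) * τ) - 1) / (g σ - 1))) := funext hA
  have hcast : HasDerivAt (fun σ : ℝ => (σ : ℂ)) 1 σ₀ := by
    exact Complex.ofRealCLM.hasDerivAt
  have hβ' : HasDerivAt β (-(Complex.I * u * ρ)) σ₀ := by
    rw [hβf]
    have h1 := ((hcast.const_mul (Complex.I * u)).mul_const (ρ : ℂ)).const_sub (κ : ℂ)
    convert h1 using 1
    · rfl
    ring
  have hE := (hd.neg.mul_const (τ : ℂ)).cexp
  have hg' : HasDerivAt g
      (((-(Complex.I * u * ρ) - -(Complex.I * u * ρ * β σ₀ + 2 * α * σ₀) / d σ₀)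
          * (β σ₀ + d σ₀)
        - (β σ₀ - d σ₀)
          * (-(Complex.I * u * ρ) + -(Complex.I * u * ρ * β σ₀ + 2 * α * σ₀) / d σ₀))
        / (β σ₀ + d σ₀) ^ 2) σ₀ := by
    rw [hgf]
    exact (hβ'.sub hd).div (hβ'.add hd) hβd
  have hg2 : HasDerivAt g
      ((2 * Complex.I * u * ρ * (β σ₀ ^ 2 - d σ₀ ^ 2) + 4 * β σ₀ * α * σ₀)
        / (d σ₀ * (β σ₀ + d σ₀) ^ 2)) σ₀ := by
    convert hg' using 1
    field_simp
    ring
  have hE2 : HasDerivAt (fun σ : ℝ => Complex.exp (-(d σ) * τ))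
      (Complex.exp (-(d σ₀) * τ) * τ * (Complex.I * u * ρ * β σ₀ + 2 * α * σ₀) / d σ₀) σ₀ := by
    convert hE using 1
    · rfl
    rw [show (-d) σ₀ = -(d σ₀) from rfl]
    field_simp
  have hN := (hg2.mul hE2).sub_const (1 : ℂ)
  have hDen := hg2.sub_const (1 : ℂ)
  have hg1' : g σ₀ - 1 ≠ 0 := sub_ne_zero.mpr hg1
  have hh := hN.div hDen hg1'
  have hlog := hh.clog_real hslit
  have hE0 : Complex.exp (-(d σ₀) * τ) ≠ 0 := Complex.exp_ne_zero _
  have hlog2 : HasDerivAt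
      (fun t : ℝ => Complex.log ((g t * Complex.exp (-(d t) * τ) - 1) / (g t - 1)))
      L σ₀ := by
    rw [hL]
    convert hlog using 1
    · rfl
    simp only [Pi.mul_apply, Pi.sub_apply, Pi.div_apply]
    set P := 2 * Complex.I * u * (ρ : ℂ) * (β σ₀ ^ 2 - d σ₀ ^ 2) + 4 * β σ₀ * α * (σ₀ : ℂ)
      with hP
    set Q := Complex.I * u * (ρ : ℂ) * β σ₀ + 2 * α * (σ₀ : ℂ) with hQ
    set S := β σ₀ + d σ₀ with hS
    have hDS : d σ₀ * S ^ 2 ≠ 0 := mul_ne_zero hd0 (pow_ne_zero 2 hβd)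
    rw [div_div, div_eq_div_iff
      (mul_ne_zero (mul_ne_zero hDS hg1') hden)
      (mul_ne_zero (pow_ne_zero 2 hg1') (div_ne_zero hden hg1'))]
    field_simp
    ring
  have hF := ((hβ'.sub hd).const_mul (τ : ℂ)).sub (hlog2.const_mul 2)
  have hσc : ((σ₀ : ℂ)) ≠ 0 := Complex.ofReal_ne_zero.mpr hσ₀
  have hpow : HasDerivAt (fun σ : ℝ => ((σ : ℂ)) ^ 2) (2 * (σ₀ : ℂ)) σ₀ := by
    have h2 := (hasDerivAt_pow 2 ((σ₀ : ℂ))).comp σ₀ hcast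
    convert h2 using 1
    · rfl
    · rfl
    simp
  have hC := (hasDerivAt_const σ₀ ((κ : ℂ) * θ)).div hpow (by simpa using pow_ne_zero 2 hσc)
  have hAd := hC.mul hF
  rw [hAf]
  convert hAd using 1
  · rfl
  · rfl
  simp only [Pi.mul_apply, Pi.sub_apply, Pi.div_apply]
  field_simp
  ring
end

section
/- Fix u ∈ ℂ and reals κ, θ, v₀, σ ≠ 0, ρ and τ₀ > 0. Set α̂ = -(1/2)·u·(u + i), γ = σ²/2, β = κ - i·u·σ·ρ; let d ∈ ℂ with d² = β² - 4·α̂·γ, β + d ≠ 0, and g = (β - d)/(β + d). Assume g ≠ 1, 1 - g·exp(-d·τ₀) ≠ 0, 1 - exp(-d·τ₀) ≠ 0, and that (g·exp(-d·τ₀) - 1)/(g - 1) lies in the slit plane. Define A(τ) = (κ·θ/σ²)·( τ·(β - d) - 2·Log((g·exp(-d·τ) - 1)/(g - 1)) ), B(τ) = ((β - d)/σ²)·(1 - exp(-d·τ))/(1 - g·exp(-d·τ)), and φ(τ) = exp(A(τ) + v₀·B(τ)). Then HasDerivAt φ ( φ(τ₀)·( (κ·θ/σ²)·( β - d - 2·d·g·exp(-d·τ₀)/(1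 - g·exp(-d·τ₀)) ) + v₀·B(τ₀)·d·exp(-d·τ₀)·(1 - g)/((1 - exp(-d·τ₀))·(1 - g·exp(-d·τ₀))) ) ) τ₀. -/
set_option maxHeartbeats 1000000

lemma heston_aux_s19 (C K v d g E b : ℂ) (h1 : g - 1 ≠ 0) (h2 : 1 - g * E ≠ 0)
    (h3 : 1 - E ≠ 0) (h4 : g * E - 1 ≠ 0) :
    C * (b - 2 * d * g * E / (1 - g * E))
      + v * (K * (1 - E) / (1 - g * E)) * d * E * (1 - g) / ((1 - E) * (1 - g * E))
    = C * (b - 2 * (g * (-d * E) / (g - 1) / ((g * E - 1) / (g - 1))))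
      + v * ((K * (d * E) * (1 - g * E) - K * (1 - E) * (g * (d * E))) / (1 - g * E) ^ 2) := by
  field_simp
  ring

/-- Derivative of the Heston characteristic function `φ_τ(u) = exp(A + v₀ B)`
with respect to the time to maturity `τ` (Equation (34) of the paper). -/
theorem heston_phi_deriv_tau (u : ℂ) (κ θ v₀ σ ρ τ₀ : ℝ) (hσ : σ ≠ 0)
    (hτ₀ : 0 < τ₀)
    (α β d g : ℂ) (hα : α = -(1/2) * u * (u + Complex.I))
    (hβ : β = (κ : ℂ) - Complex.I * u * σ * ρ)
    (hd : d ^ 2 = β ^ 2 - 4 * α * ((σ : ℂ) ^ 2 / 2))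
    (hβd : β + d ≠ 0) (hg : g = (β - d) / (β + d))
    (hg1 : g ≠ 1)
    (hden : 1 - g * Complex.exp (-d * τ₀) ≠ 0)
    (hnum : 1 - Complex.exp (-d * τ₀) ≠ 0)
    (hslit : (g * Complex.exp (-d * τ₀) - 1) / (g - 1) ∈ Complex.slitPlane)
    (A B φ : ℝ → ℂ)
    (hA : ∀ τ : ℝ, A τ = ((κ : ℂ) * θ / σ ^ 2) *
        ((τ : ℂ) * (β - d)
          - 2 * Complex.log ((g * Complex.exp (-d * τ) - 1) / (g - 1))))
    (hB : ∀ τ : ℝ, B τ = ((β - d) / (σ : ℂ) ^ 2) *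
        (1 - Complex.exp (-d * τ)) / (1 - g * Complex.exp (-d * τ)))
    (hφ : ∀ τ : ℝ, φ τ = Complex.exp (A τ + (v₀ : ℂ) * B τ)) :
    HasDerivAt φ
      (φ τ₀ *
        (((κ : ℂ) * θ / σ ^ 2) *
            (β - d - 2 * d * g * Complex.exp (-d * τ₀)
              / (1 - g * Complex.exp (-d * τ₀)))
          + (v₀ : ℂ) * B τ₀ * d * Complex.exp (-d * τ₀) * (1 - g)
            / ((1 - Complex.exp (-d * τ₀))
                * (1 - g * Complex.exp (-d * τ₀))))) τ₀ := by
  have hσ2 : ((σ : ℂ)) ^ 2 ≠ 0 := pow_ne_zero _ (by exact_mod_cast hσ)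
  have hg1' : g - 1 ≠ 0 := sub_ne_zero.mpr hg1
  set E : ℂ := Complex.exp (-d * τ₀) with hEdef
  have hge1 : g * E - 1 ≠ 0 := by
    intro h
    apply hden
    rw [← neg_eq_zero]; ring_nf; ring_nf at h; linear_combination h
  -- derivative of τ ↦ exp(-d τ)
  have hτ : HasDerivAt (fun τ : ℝ => ((τ : ℝ) : ℂ)) 1 τ₀ := by
    simpa using (hasDerivAt_id τ₀).ofReal_comp
  have hE : HasDerivAt (fun τ : ℝ => Complex.exp (-d * τ)) (-d * E) τ₀ := by
    have h1 : HasDerivAt (fun τ : ℝ => -d * (τ : ℂ)) (-d) τ₀ := by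
      simpa using hτ.const_mul (-d)
    have h2 := h1.cexp
    rw [hEdef]
    convert h2 using 1
    try ring
  -- w(τ) = (g exp(-dτ) - 1)/(g-1)
  have hw : HasDerivAt (fun τ : ℝ => (g * Complex.exp (-d * τ) - 1) / (g - 1))
      ((g * (-d * E)) / (g - 1)) τ₀ := ((hE.const_mul g).sub_const 1).div_const _
  have hlog : HasDerivAt (fun τ : ℝ => Complex.log ((g * Complex.exp (-d * τ) - 1) / (g - 1)))
      ((g * (-d * E)) / (g - 1) / ((g * E - 1) / (g - 1))) τ₀ := hw.clog_real hslit
  -- derivative of A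
  have hlin : HasDerivAt (fun τ : ℝ => ((τ : ℝ) : ℂ) * (β - d)) (β - d) τ₀ := by
    simpa using hτ.mul_const (β - d)
  have hA' : HasDerivAt A
      (((κ : ℂ) * θ / σ ^ 2) *
        ((β - d) - 2 * ((g * (-d * E)) / (g - 1) / ((g * E - 1) / (g - 1))))) τ₀ := by
    have := ((hlin.sub (hlog.const_mul 2)).const_mul ((κ : ℂ) * θ / σ ^ 2))
    have heq : A = fun τ : ℝ => ((κ : ℂ) * θ / σ ^ 2) *
        ((τ : ℂ) * (β - d) - 2 * Complex.log ((g * Complex.exp (-d * τ) - 1) / (g - 1))) :=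
      funext hA
    rw [heq]
    convert this using 1
    rfl
    rfl
  -- derivative of B
  have hN : HasDerivAt (fun τ : ℝ => ((β - d) / (σ : ℂ) ^ 2) * (1 - Complex.exp (-d * τ)))
      (((β - d) / (σ : ℂ) ^ 2) * (d * E)) τ₀ := by
    have := ((hasDerivAt_const τ₀ (1 : ℂ)).sub hE).const_mul ((β - d) / (σ : ℂ) ^ 2)
    convert this using 1
    rfl
    rfl
    try ring
  have hD : HasDerivAt (fun τ : ℝ => 1 - g * Complex.exp (-d * τ)) (g * (d * E)) τ₀ := by
    have := (hasDerivAt_const τ₀ (1 : ℂ)).sub (hE.const_mul g)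
    convert this using 1
    rfl
    rfl
    try ring
  have hB' : HasDerivAt B
      ((((β - d) / (σ : ℂ) ^ 2) * (d * E) * (1 - g * E)
        - ((β - d) / (σ : ℂ) ^ 2) * (1 - E) * (g * (d * E))) / (1 - g * E) ^ 2) τ₀ := by
    have heq : B = fun τ : ℝ => (((β - d) / (σ : ℂ) ^ 2) * (1 - Complex.exp (-d * τ)))
        / (1 - g * Complex.exp (-d * τ)) := by
      funext τ; rw [hB]
    rw [heq]
    exact hN.div hD hden
  -- combine
  have hF : HasDerivAt (fun τ : ℝ => A τ + (v₀ : ℂ) * B τ)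
      ((((κ : ℂ) * θ / σ ^ 2) *
        ((β - d) - 2 * ((g * (-d * E)) / (g - 1) / ((g * E - 1) / (g - 1)))))
        + (v₀ : ℂ) * ((((β - d) / (σ : ℂ) ^ 2) * (d * E) * (1 - g * E)
        - ((β - d) / (σ : ℂ) ^ 2) * (1 - E) * (g * (d * E))) / (1 - g * E) ^ 2)) τ₀ :=
    hA'.add (hB'.const_mul _)
  have hφ' := hF.cexp
  have heqφ : φ = fun τ : ℝ => Complex.exp (A τ + (v₀ : ℂ) * B τ) := funext hφ
  rw [heqφ]
  convert hφ' using 1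
  simp only [hB]
  congr 1
  have := heston_aux_s19 ((κ : ℂ) * θ / σ ^ 2) ((β - d) / (σ : ℂ) ^ 2) v₀ d g E (β - d)
    hg1' hden hnum hge1
  linear_combination this
end
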